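/- Let G be a group acting on a set I, and let π : G → U(ℓ²(I)) be the associated permutation representation (π(g)δ_i = δ_{g·i}). If π has spectral gap, then for every unitary representation ρ : G → U(K) on a complex Hilbert space K, the tensor product representation π ⊗ ρ on ℓ²(I) ⊗ K also has spectral gap. (In other words, permutation representations with spectral gap automatically have stable spectral gap.) -/

import Mathlib

open scoped ENNReal

set_option maxHeartbeats 1000000
set_option synthInstance.maxHeartbeats 1000000
set_option linter.unusedSectionVars false

/-- A unitary representation has spectral gap if some finite set of group elements uniformly
moves every vector. -/
def RepGap {G : Type*} [Group G] {H : Type*} [NormedAddCommGroup H]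
    [InnerProductSpace ℂ H] [CompleteSpace H]
    (π : G →* unitary (H →L[ℂ] H)) : Prop :=
  ∃ (F : Finset G) (ε : ℝ), 0 < ε ∧
    ∀ ξ : H, ∃ g ∈ F, ε * ‖ξ‖ ≤ ‖(π g : H →L[ℂ] H) ξ - ξ‖

/-- The permutation representation of `G` on `ℓ²(I)` associated to an action of `G` on `I`
has spectral gap. -/
def PermRepGap {G : Type*} [Group G] {I : Type*} (act : G → I → I) : Prop :=
  ∀ π : G →* unitary (lp (fun _ : I => ℂ) 2 →L[ℂ] lp (fun _ : I => ℂ) 2),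
    (∀ (g : G) (ξ : lp (fun _ : I => ℂ) 2) (i : I),
        ((π g : lp (fun _ : I => ℂ) 2 →L[ℂ] lp (fun _ : I => ℂ) 2) ξ) i = ξ (act g⁻¹ i)) →
    RepGap π

noncomputable section SpecGapAux

namespace SpecGapAux

variable {I : Type*} {E : Type*} [NormedAddCommGroup E] [NormedSpace ℂ E]

lemma two_toReal_pos : 0 < (2 : ℝ≥0∞).toReal := by norm_num

lemma memℓp_comp (e : I ≃ I) {f : ∀ _ : I, E} (hf : Memℓp f 2) :
    Memℓp (fun i => f (e i)) 2 := by
  rw [memℓp_gen_iff two_toReal_pos] at hf ⊢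
  exact (e.summable_iff (f := fun i => ‖f i‖ ^ (2 : ℝ≥0∞).toReal)).2 hf

/-- Precomposition with a bijection of the index set, as a linear isometric equivalence
of `ℓ²(I, E)`. -/
def lpCongr (e : I ≃ I) : lp (fun _ : I => E) 2 ≃ₗᵢ[ℂ] lp (fun _ : I => E) 2 where
  toFun f := ⟨fun i => f (e i), memℓp_comp e (lp.memℓp f)⟩
  invFun f := ⟨fun i => f (e.symm i), memℓp_comp e.symm (lp.memℓp f)⟩
  left_inv f := by ext i; simp
  right_inv f := by ext i; simp
  map_add' f g := by ext i; simp; rfl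
  map_smul' c f := by ext i; simp
  norm_map' f := by
    rw [lp.norm_eq_tsum_rpow two_toReal_pos, lp.norm_eq_tsum_rpow two_toReal_pos]
    congr 1
    exact e.tsum_eq fun i => ‖f i‖ ^ (2 : ℝ≥0∞).toReal

@[simp] lemma lpCongr_apply (e : I ≃ I) (f : lp (fun _ : I => E) 2) (i : I) :
    (lpCongr e f : ∀ _ : I, E) i = f (e i) := rfl

/-- The permutation representation of `G` on `ℓ²(I)`. -/
def permRep (G : Type*) [Group G] [MulAction G I] :
    G →* unitary (lp (fun _ : I => ℂ) 2 →L[ℂ] lp (fun _ : I => ℂ) 2) where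
  toFun g := Unitary.linearIsometryEquiv.symm (lpCongr (MulAction.toPerm g).symm)
  map_one' := by
    have h : lpCongr (E := ℂ) (MulAction.toPerm (1 : G) : Equiv.Perm I).symm = 1 := by
      refine LinearIsometryEquiv.ext fun ξ => ?_
      ext i
      simp
    rw [h, map_one]
  map_mul' g h := by
    have key : lpCongr (E := ℂ) (MulAction.toPerm (g * h) : Equiv.Perm I).symm =
        lpCongr (MulAction.toPerm g).symm * lpCongr (MulAction.toPerm h).symm := by
      refine LinearIsometryEquiv.ext fun ξ => ?_
      ext i
      simp [LinearIsometryEquiv.mul_def, mul_smul]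
    rw [key, map_mul]

lemma permRep_apply {G : Type*} [Group G] [MulAction G I] (g : G)
    (ξ : lp (fun _ : I => ℂ) 2) (i : I) :
    ((permRep (I := I) G g : lp (fun _ : I => ℂ) 2 →L[ℂ] lp (fun _ : I => ℂ) 2) ξ) i =
      ξ (g⁻¹ • i) := rfl

lemma lp_norm_le {F : Type*} [NormedAddCommGroup F]
    (f : lp (fun _ : I => E) 2) (g : lp (fun _ : I => F) 2)
    (h : ∀ i, ‖f i‖ ≤ ‖g i‖) : ‖f‖ ≤ ‖g‖ := by
  refine lp.norm_le_of_tsum_le two_toReal_pos (norm_nonneg _) ?_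
  calc ∑' i, ‖f i‖ ^ (2 : ℝ≥0∞).toReal
      ≤ ∑' i, ‖g i‖ ^ (2 : ℝ≥0∞).toReal :=
        ((lp.memℓp f).summable two_toReal_pos).tsum_le_tsum (fun i => Real.rpow_le_rpow (norm_nonneg _) (h i) two_toReal_pos.le)
          ((lp.memℓp g).summable two_toReal_pos)
    _ = ‖g‖ ^ (2 : ℝ≥0∞).toReal := (lp.norm_rpow_eq_tsum two_toReal_pos g).symm

end SpecGapAux

end SpecGapAux

open SpecGapAux in
/-- If the permutation representation `π` of `G ↷ I` on `ℓ²(I)` has spectral gap, then for every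
unitary representation `ρ` of `G` on a Hilbert space `K`, the tensor product representation
`π ⊗ ρ` (realized on `ℓ²(I, K) ≅ ℓ²(I) ⊗ K`) has spectral gap. -/
theorem stmt1 {G I : Type*} [Group G] [MulAction G I]
    (hgap : PermRepGap (fun (g : G) (i : I) => g • i))
    {K : Type*} [NormedAddCommGroup K] [InnerProductSpace ℂ K] [CompleteSpace K]
    (ρ : G →* unitary (K →L[ℂ] K))
    (σ : G →* unitary (lp (fun _ : I => K) 2 →L[ℂ] lp (fun _ : I => K) 2))
    (hσ : ∀ (g : G) (ξ : lp (fun _ : I => K) 2) (i : I),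
        ((σ g : lp (fun _ : I => K) 2 →L[ℂ] lp (fun _ : I => K) 2) ξ) i
          = (ρ g : K →L[ℂ] K) (ξ (g⁻¹ • i))) :
    RepGap σ := by
  obtain ⟨F, ε, hε, hF⟩ := hgap (permRep G) (fun g ξ i => permRep_apply g ξ i)
  refine ⟨F, ε, hε, fun ξ => ?_⟩
  have hmem : Memℓp (fun i : I => (‖ξ i‖ : ℂ)) 2 := by
    rw [memℓp_gen_iff two_toReal_pos]
    have := (lp.memℓp ξ).summable two_toReal_pos
    simpa using this
  set η : lp (fun _ : I => ℂ) 2 := ⟨fun i => (‖ξ i‖ : ℂ), hmem⟩ with hηdef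
  have hηi : ∀ i, η i = (‖ξ i‖ : ℂ) := fun i => rfl
  have hnorm : ‖η‖ = ‖ξ‖ := by
    refine le_antisymm (lp_norm_le η ξ fun i => ?_) (lp_norm_le ξ η fun i => ?_) <;>
      simp [hηi]
  obtain ⟨g, hg, hge⟩ := hF η
  refine ⟨g, hg, ?_⟩
  rw [← hnorm]
  refine hge.trans (lp_norm_le _ _ fun i => ?_)
  have h1 : ((permRep (I := I) G g : _ →L[ℂ] _) η - η) i =
      (‖ξ (g⁻¹ • i)‖ : ℂ) - (‖ξ i‖ : ℂ) := by
    rw [lp.coeFn_sub, Pi.sub_apply, permRep_apply]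
  have h2 : ((σ g : _ →L[ℂ] _) ξ - ξ) i = (ρ g : K →L[ℂ] K) (ξ (g⁻¹ • i)) - ξ i := by
    rw [lp.coeFn_sub, Pi.sub_apply, hσ]
  rw [h1, h2]
  have h3 : ‖(ρ g : K →L[ℂ] K) (ξ (g⁻¹ • i))‖ = ‖ξ (g⁻¹ • i)‖ := Unitary.norm_map _ _
  calc ‖(‖ξ (g⁻¹ • i)‖ : ℂ) - (‖ξ i‖ : ℂ)‖ = |‖ξ (g⁻¹ • i)‖ - ‖ξ i‖| := by
        rw [← Complex.ofReal_sub, Complex.norm_real, Real.norm_eq_abs]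
    _ ≤ ‖(ρ g : K →L[ℂ] K) (ξ (g⁻¹ • i)) - ξ i‖ := by
        rw [← h3]; exact abs_norm_sub_norm_le _ _
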